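/- Let K, ξ ∈ ℝ with K ≠ 0 and ξ² > K²/4. Set ω_K = √(ξ² − K²/4), μ = (ξ + ω_K)/2 and ν = (ξ − ω_K)/2. If C₁, C₂ ∈ ℂ satisfy i·μ·C₁ = (K/4)·conj(C₂) and i·ν·C₂ = (K/4)·conj(C₁), then A(T) = C₁·e^{iμT} + C₂·e^{iνT} satisfies A'(T) = (K/4)·e^{iξT}·conj(A(T)) for all T ∈ ℝ. -/

import Mathlib

private lemma aux_deriv (C c : ℂ) (T : ℝ) :
    HasDerivAt (fun s : ℝ => C * Complex.exp (c * (s : ℂ)))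
      (C * c * Complex.exp (c * (T : ℂ))) T := by
  have h0 : HasDerivAt (fun s : ℝ => c * (s : ℂ)) c T := by
    simpa using (Complex.ofRealCLM.hasDerivAt (x := T)).const_mul c
  have h1 := (h0.cexp).const_mul C
  refine h1.congr_deriv ?_
  ring

/-- In Case 1 (ξ² > K²/4) of the principal parametric resonance, if the
coefficients C₁, C₂ satisfy iμC₁ = (K/4)conj(C₂) and iνC₂ = (K/4)conj(C₁), then
A(T) = C₁e^{iμT} + C₂e^{iνT} solves the amplitude equation A' = (K/4)e^{iξT}conj(A). -/
theorem stmt_3 (K ξ : ℝ) (hK : K ≠ 0) (hξ : ξ ^ 2 > K ^ 2 / 4) (C₁ C₂ : ℂ)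
    (h₁ : Complex.I * (((ξ + Real.sqrt (ξ ^ 2 - K ^ 2 / 4)) / 2 : ℝ) : ℂ) * C₁ =
      ((K : ℂ) / 4) * (starRingEnd ℂ) C₂)
    (h₂ : Complex.I * (((ξ - Real.sqrt (ξ ^ 2 - K ^ 2 / 4)) / 2 : ℝ) : ℂ) * C₂ =
      ((K : ℂ) / 4) * (starRingEnd ℂ) C₁) :
    ∀ T : ℝ,
      HasDerivAt (fun s : ℝ =>
          C₁ * Complex.exp (Complex.I *
            (((ξ + Real.sqrt (ξ ^ 2 - K ^ 2 / 4)) / 2 : ℝ) : ℂ) * (s : ℂ))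
          + C₂ * Complex.exp (Complex.I *
            (((ξ - Real.sqrt (ξ ^ 2 - K ^ 2 / 4)) / 2 : ℝ) : ℂ) * (s : ℂ)))
        (((K : ℂ) / 4) * Complex.exp (Complex.I * (ξ : ℂ) * (T : ℂ)) *
          (starRingEnd ℂ)
            (C₁ * Complex.exp (Complex.I *
                (((ξ + Real.sqrt (ξ ^ 2 - K ^ 2 / 4)) / 2 : ℝ) : ℂ) * (T : ℂ))
              + C₂ * Complex.exp (Complex.I *
                (((ξ - Real.sqrt (ξ ^ 2 - K ^ 2 / 4)) / 2 : ℝ) : ℂ) * (T : ℂ))))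
        T := by
  intro T
  set μ : ℝ := (ξ + Real.sqrt (ξ ^ 2 - K ^ 2 / 4)) / 2 with hμ
  set ν : ℝ := (ξ - Real.sqrt (ξ ^ 2 - K ^ 2 / 4)) / 2 with hν
  have hsum : (μ : ℂ) + (ν : ℂ) = (ξ : ℂ) := by
    push_cast [hμ, hν]; ring
  have h := (aux_deriv C₁ (Complex.I * (μ : ℂ)) T).add (aux_deriv C₂ (Complex.I * (ν : ℂ)) T)
  refine h.congr_deriv (Eq.symm ?_)
  -- goal: RHS = C₁ * (I*μ) * exp(I*μ*T) + C₂ * (I*ν) * exp(I*ν*T)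
  have cexp : ∀ r : ℝ, (starRingEnd ℂ) (Complex.exp (Complex.I * (r : ℂ) * (T : ℂ)))
      = Complex.exp (-(Complex.I * (r : ℂ) * (T : ℂ))) := by
    intro r
    rw [← Complex.exp_conj]
    congr 1
    simp [map_mul]
  rw [map_add, map_mul, map_mul, cexp μ, cexp ν]
  have e1 : Complex.exp (Complex.I * (ξ : ℂ) * (T : ℂ)) *
      Complex.exp (-(Complex.I * (μ : ℂ) * (T : ℂ))) = Complex.exp (Complex.I * (ν : ℂ) * (T : ℂ)) := by
    rw [← Complex.exp_add]; congr 1; rw [← hsum]; ring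
  have e2 : Complex.exp (Complex.I * (ξ : ℂ) * (T : ℂ)) *
      Complex.exp (-(Complex.I * (ν : ℂ) * (T : ℂ))) = Complex.exp (Complex.I * (μ : ℂ) * (T : ℂ)) := by
    rw [← Complex.exp_add]; congr 1; rw [← hsum]; ring
  calc ((K : ℂ) / 4) * Complex.exp (Complex.I * (ξ : ℂ) * (T : ℂ)) *
      ((starRingEnd ℂ) C₁ * Complex.exp (-(Complex.I * (μ : ℂ) * (T : ℂ)))
        + (starRingEnd ℂ) C₂ * Complex.exp (-(Complex.I * (ν : ℂ) * (T : ℂ))))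
      = ((K : ℂ) / 4) * (starRingEnd ℂ) C₁ *
          (Complex.exp (Complex.I * (ξ : ℂ) * (T : ℂ)) * Complex.exp (-(Complex.I * (μ : ℂ) * (T : ℂ))))
        + ((K : ℂ) / 4) * (starRingEnd ℂ) C₂ *
          (Complex.exp (Complex.I * (ξ : ℂ) * (T : ℂ)) * Complex.exp (-(Complex.I * (ν : ℂ) * (T : ℂ)))) := by ring
    _ = ((K : ℂ) / 4) * (starRingEnd ℂ) C₁ * Complex.exp (Complex.I * (ν : ℂ) * (T : ℂ))
        + ((K : ℂ) / 4) * (starRingEnd ℂ) C₂ * Complex.exp (Complex.I * (μ : ℂ) * (T : ℂ)) := by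
          rw [e1, e2]
    _ = C₁ * (Complex.I * (μ : ℂ)) * Complex.exp (Complex.I * (μ : ℂ) * (T : ℂ))
        + C₂ * (Complex.I * (ν : ℂ)) * Complex.exp (Complex.I * (ν : ℂ) * (T : ℂ)) := by
          rw [← h₁, ← h₂]; ring
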